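/- Let r ≥ 1 and let z = (z₀⁽¹⁾, z₁⁽¹⁾, z₂⁽¹⁾, z₀⁽²⁾) ∈ Mat(2r × 4r, ℂ) be written in blocks in Mat(2r × r, ℂ), and assume det(z₀⁽¹⁾ | z₁⁽¹⁾) ≠ 0 and det(z₀⁽¹⁾ | z₀⁽²⁾) ≠ 0. Then there exist g ∈ GL(2r, ℂ), h ∈ H_{(3,1)}, and x'' ∈ Mat(r×r, ℂ) such that g · z · h is the 2r×4r matrix with block rows (1_r, 0, 0, x'') and (0, 1_r, 0, −1_r). -/

import Mathlib

open Matrix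

/-- The `2r × nr` matrix assembled from `n` block columns of size `2r × r`. -/
def ofBlockCols (r n : ℕ) (z : Fin n → Matrix (Fin r ⊕ Fin r) (Fin r) ℂ) :
    Matrix (Fin r ⊕ Fin r) (Fin n × Fin r) ℂ :=
  Matrix.of fun i jk => z jk.1 i jk.2

/-- The `nr × nr` matrix assembled from an `n × n` array of `r × r` blocks. -/
def ofBlockMat (r n : ℕ) (H : Fin n → Fin n → Matrix (Fin r) (Fin r) ℂ) :
    Matrix (Fin n × Fin r) (Fin n × Fin r) ℂ :=
  Matrix.of fun jk lk => H jk.1 lk.1 jk.2 lk.2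

lemma mul_ofBlockCols (r n : ℕ) (g : Matrix (Fin r ⊕ Fin r) (Fin r ⊕ Fin r) ℂ)
    (z : Fin n → Matrix (Fin r ⊕ Fin r) (Fin r) ℂ) :
    g * ofBlockCols r n z = ofBlockCols r n (fun j => g * z j) := by
  ext i ⟨j, k⟩
  simp [ofBlockCols, mul_apply]

lemma ofBlockCols_mul_ofBlockMat (r n : ℕ)
    (z : Fin n → Matrix (Fin r ⊕ Fin r) (Fin r) ℂ)
    (H : Fin n → Fin n → Matrix (Fin r) (Fin r) ℂ) :
    ofBlockCols r n z * ofBlockMat r n H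
      = ofBlockCols r n (fun l => ∑ j, z j * H j l) := by
  ext i ⟨l, k⟩
  simp [ofBlockCols, ofBlockMat, mul_apply, Fintype.sum_prod_type, Matrix.sum_apply,
    Finset.mul_sum, Finset.sum_mul]

lemma fromRows_add {m₁ m₂ n : Type*} (a c : Matrix m₁ n ℂ) (b d : Matrix m₂ n ℂ) :
    fromRows a b + fromRows c d = fromRows (a + c) (b + d) := by
  ext (i | i) j <;> simp

/-- Normal form lemma (form `x₃`) for `(m, N) = (2r, 4r)`, partition `λ = (3,1)`:
`z = (z₀⁽¹⁾, z₁⁽¹⁾, z₂⁽¹⁾, z₀⁽²⁾)` with `det(z₀⁽¹⁾ | z₁⁽¹⁾) ≠ 0` and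
`det(z₀⁽¹⁾ | z₀⁽²⁾) ≠ 0` can be brought, by the action of `GL(2r, ℂ) × H_{(3,1)}`,
to the normal form with block rows `(1_r, 0, 0, x'')` and `(0, 1_r, 0, −1_r)`. -/
theorem normal_form_partition_31_third (r : ℕ) (hr : 1 ≤ r)
    (z : Fin 4 → Matrix (Fin r ⊕ Fin r) (Fin r) ℂ)
    (h01 : (fromCols (z 0) (z 1)).det ≠ 0)
    (h03 : (fromCols (z 0) (z 3)).det ≠ 0) :
    ∃ (g : GL (Fin r ⊕ Fin r) ℂ) (h₀ k : GL (Fin r) ℂ)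
      (h₁ h₂ : Matrix (Fin r) (Fin r) ℂ) (x'' : Matrix (Fin r) (Fin r) ℂ),
      (g : Matrix (Fin r ⊕ Fin r) (Fin r ⊕ Fin r) ℂ) * ofBlockCols r 4 z *
          ofBlockMat r 4
            ![![(h₀ : Matrix (Fin r) (Fin r) ℂ), h₁, h₂, 0],
              ![0, (h₀ : Matrix (Fin r) (Fin r) ℂ), h₁, 0],
              ![0, 0, (h₀ : Matrix (Fin r) (Fin r) ℂ), 0],
              ![0, 0, 0, (k : Matrix (Fin r) (Fin r) ℂ)]] =
        ofBlockCols r 4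
          ![fromRows 1 0, fromRows 0 1, 0, fromRows x'' (-1)] := by
  classical
  set A := fromCols (z 0) (z 1) with hAdef
  have hA : IsUnit A.det := isUnit_iff_ne_zero.mpr h01
  set gA : (Matrix (Fin r ⊕ Fin r) (Fin r ⊕ Fin r) ℂ)ˣ := A.nonsingInvUnit hA with hgA
  have hgAval : (gA : Matrix (Fin r ⊕ Fin r) (Fin r ⊕ Fin r) ℂ) = A := rfl
  set B : Matrix (Fin r ⊕ Fin r) (Fin r ⊕ Fin r) ℂ := ↑gA⁻¹ with hBdef
  have hBA : B * A = 1 := by rw [hBdef, ← hgAval]; exact gA.inv_mul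
  have h1 : fromCols (B * z 0) (B * z 1) = fromCols (fromRows 1 0) (fromRows 0 1) := by
    rw [← mul_fromCols, ← hAdef, hBA, fromCols_fromRows_eq_fromBlocks,
      fromBlocks_one]
  obtain ⟨hz0, hz1⟩ := (fromCols_ext_iff _ _ _ _).mp h1
  set u := toRows₁ (B * z 2) with hu
  set v := toRows₂ (B * z 2) with hv
  have hz2 : B * z 2 = fromRows u v := (fromRows_toRows _).symm
  set p := toRows₁ (B * z 3) with hp
  set q := toRows₂ (B * z 3) with hq
  have hz3 : B * z 3 = fromRows p q := (fromRows_toRows _).symm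
  -- q is invertible
  have hBdet : IsUnit B.det := (isUnit_iff_isUnit_det B).mp gA⁻¹.isUnit
  have hblock : B * fromCols (z 0) (z 3) = fromBlocks 1 p 0 q := by
    rw [mul_fromCols, hz0, hz3, fromCols_fromRows_eq_fromBlocks]
  have hqdet : IsUnit q.det := by
    have : (B * fromCols (z 0) (z 3)).det = B.det * (fromCols (z 0) (z 3)).det :=
      det_mul _ _
    rw [hblock, det_fromBlocks_zero₂₁, det_one, one_mul] at this
    rw [this]
    exact hBdet.mul (isUnit_iff_ne_zero.mpr h03)
  set qU : (Matrix (Fin r) (Fin r) ℂ)ˣ := q.nonsingInvUnit hqdet with hqU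
  have hqUval : (qU : Matrix (Fin r) (Fin r) ℂ) = q := rfl
  set Q : Matrix (Fin r) (Fin r) ℂ := ↑qU⁻¹ with hQdef
  have hqQ : q * Q = 1 := by rw [hQdef, ← hqUval]; exact qU.mul_inv
  -- the GL(2r) element
  set G : Matrix (Fin r ⊕ Fin r) (Fin r ⊕ Fin r) ℂ := fromBlocks 1 v 0 1 with hGdef
  have hGdet : IsUnit G.det := by
    rw [hGdef, det_fromBlocks_zero₂₁, det_one, one_mul]
    exact isUnit_one
  refine ⟨G.nonsingInvUnit hGdet * gA⁻¹, 1, -qU⁻¹, -v, -u, -(p * Q) - v, ?_⟩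
  have hgval : ((G.nonsingInvUnit hGdet * gA⁻¹ : (Matrix (Fin r ⊕ Fin r) (Fin r ⊕ Fin r) ℂ)ˣ) :
      Matrix (Fin r ⊕ Fin r) (Fin r ⊕ Fin r) ℂ) = G * B := rfl
  have hkval : ((-qU⁻¹ : (Matrix (Fin r) (Fin r) ℂ)ˣ) : Matrix (Fin r) (Fin r) ℂ) = -Q := by
    rw [Units.val_neg, hQdef]
  rw [hgval, hkval, Units.val_one, mul_ofBlockCols, ofBlockCols_mul_ofBlockMat]
  refine congrArg (ofBlockCols r 4) (funext fun l => ?_)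
  have key : ∀ (x y C : Matrix (Fin r) (Fin r) ℂ),
      G * fromRows x y * C = fromRows ((x + v * y) * C) (y * C) := by
    intro x y C
    rw [hGdef, fromBlocks_mul_fromRows, fromRows_mul]
    simp
  have assoc : ∀ j, G * B * z j = G * (B * z j) := fun j => Matrix.mul_assoc _ _ _
  fin_cases l <;>
    simp only [Fin.sum_univ_four, Fin.mk_zero, Fin.mk_one, show (⟨2, by omega⟩ : Fin 4) = 2 from rfl,
      show (⟨3, by omega⟩ : Fin 4) = 3 from rfl, Matrix.cons_val_zero, Matrix.cons_val_one,
      Matrix.head_cons, Matrix.cons_val_two, Matrix.tail_cons, Matrix.cons_val_three,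
      Matrix.head_fin_const, Fin.isValue, assoc, hz0, hz1, hz2, hz3, Matrix.mul_zero,
      Matrix.mul_one, key, fromRows_add, add_zero, zero_add]
  · -- column 1
    rw [fromRows_ext_iff]
    constructor <;> noncomm_ring
  · -- column 2
    rw [← fromRows_zero (m₁ := Fin r) (m₂ := Fin r) (n := Fin r) (R := ℂ), fromRows_ext_iff]
    constructor <;> noncomm_ring
  · -- column 3
    rw [fromRows_ext_iff]
    constructor
    · rw [add_mul, mul_neg, mul_neg, Matrix.mul_assoc, hqQ, mul_one]
      abel
    · rw [mul_neg, hqQ]
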